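/- The number of subspaces V of dimension s at injection distance exactly d from a fixed r-dimensional subspace U of GF(q)^n equals the number of subspaces of dimension s at subspace distance exactly 2d - |r-s| from U; explicitly, for r ≥ s it equals q^{d(d+s-r)} [r choose d]_q [n-r choose d+s-r]_q and for r ≤ s it equals q^{d(d+r-s)} [r choose d+r-s]_q [n-r choose d]_q. -/

import Mathlib

open Module

/-- The Gaussian binomial coefficient `[n choose r]_q`, via its product formula. -/
noncomputable def gaussBinom (q n r : ℕ) : ℝ :=
  ∏ i ∈ Finset.range r, (((q : ℝ) ^ n - (q : ℝ) ^ i) / ((q : ℝ) ^ r - (q : ℝ) ^ i))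

/-- Gaussian binomial with integer lower index, `0` for negative lower index. -/
noncomputable def gaussZ (q m : ℕ) (k : ℤ) : ℝ :=
  if 0 ≤ k then gaussBinom q m k.toNat else 0

/-- The subspace distance `d_S(U,V) = dim(U+V) - dim(U∩V)`. -/
noncomputable def dS {F : Type} [Field F] {n : ℕ} (U V : Submodule F (Fin n → F)) : ℕ :=
  Module.finrank F ↥(U ⊔ V) - Module.finrank F ↥(U ⊓ V)

/-- The injection distance `d_I(U,V) = max{dim U, dim V} - dim(U∩V)`. -/
noncomputable def dI {F : Type} [Field F] {n : ℕ} (U V : Submodule F (Fin n → F)) : ℕ :=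
  max (Module.finrank F ↥U) (Module.finrank F ↥V) - Module.finrank F ↥(U ⊓ V)

noncomputable def PP (q m j : ℕ) : ℝ := ∏ i ∈ Finset.range j, ((q:ℝ)^m - (q:ℝ)^i)

lemma PP_pos {q : ℕ} (hq : 2 ≤ q) {m j : ℕ} (h : j ≤ m) : 0 < PP q m j := by
  apply Finset.prod_pos
  intro i hi
  simp only [Finset.mem_range] at hi
  have : (q:ℝ)^i < (q:ℝ)^m := by
    apply pow_lt_pow_right₀ (by exact_mod_cast hq.trans_lt' one_lt_two) (lt_of_lt_of_le hi h)
  linarith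

lemma PP_zero {q : ℕ} {m j : ℕ} (h : m < j) : PP q m j = 0 := by
  apply Finset.prod_eq_zero (Finset.mem_range.mpr h)
  ring

lemma gaussBinom_eq_div (q m j : ℕ) : gaussBinom q m j = PP q m j / PP q j j := by
  rw [gaussBinom, PP, PP, Finset.prod_div_distrib]

lemma PP_split {q m k : ℕ} (h : k ≤ m) :
    PP q m m = PP q m k * (q:ℝ)^(k*(m-k)) * PP q (m-k) (m-k) := by
  have hm : m = k + (m - k) := by omega
  rw [PP, PP, PP]
  nth_rewrite 1 [hm]
  rw [Finset.prod_range_add]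
  have hY : ∏ x ∈ Finset.range (m-k), ((q:ℝ)^m - (q:ℝ)^(k+x))
      = (q:ℝ)^(k*(m-k)) * ∏ x ∈ Finset.range (m-k), ((q:ℝ)^(m-k) - (q:ℝ)^x) := by
    calc ∏ x ∈ Finset.range (m-k), ((q:ℝ)^m - (q:ℝ)^(k+x))
        = ∏ x ∈ Finset.range (m-k), ((q:ℝ)^k * ((q:ℝ)^(m-k) - (q:ℝ)^x)) := by
          apply Finset.prod_congr rfl
          intro i hi
          rw [mul_sub, ← pow_add, ← pow_add]
          congr 2 <;> omega
      _ = (q:ℝ)^(k*(m-k)) * ∏ x ∈ Finset.range (m-k), ((q:ℝ)^(m-k) - (q:ℝ)^x) := by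
          rw [Finset.prod_mul_distrib, Finset.prod_const, Finset.card_range, ← pow_mul]
  rw [hY]
  ring

lemma gaussBinom_symm {q m k : ℕ} (hq : 2 ≤ q) (h : k ≤ m) :
    gaussBinom q m k = gaussBinom q m (m - k) := by
  have h2 : m - k ≤ m := by omega
  have e1 := PP_split (q := q) h
  have e2 := PP_split (q := q) h2
  rw [show m - (m - k) = k by omega, show (m - k) * k = k * (m - k) from mul_comm _ _] at e2
  have p1 := PP_pos (q := q) hq (le_refl k)
  have p2 := PP_pos (q := q) hq (le_refl (m - k))
  rw [gaussBinom_eq_div, gaussBinom_eq_div, div_eq_div_iff p1.ne' p2.ne']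
  have hq0 : ((q : ℝ)) ^ (k * (m - k)) ≠ 0 := by positivity
  apply mul_right_cancel₀ hq0
  linear_combination e2 - e1

section Aux

variable {F M : Type*} [Field F] [Fintype F] [AddCommGroup M] [Module F M]
  [FiniteDimensional F M]

lemma card_LI (j : ℕ) :
    (Nat.card {v : Fin j → M // LinearIndependent F v} : ℝ)
      = PP (Fintype.card F) (finrank F M) j := by
  have : Finite M := Module.finite_of_finite F
  by_cases hj : j ≤ finrank F M
  · rw [card_linearIndependent hj, PP]
    rw [Nat.cast_prod, Finset.prod_fin_eq_prod_range]
    apply Finset.prod_congr rfl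
    intro i hi
    simp only [Finset.mem_range] at hi
    rw [dif_pos hi, Nat.cast_sub (Nat.pow_le_pow_right Fintype.card_pos (by omega))]
    push_cast; ring
  · have : IsEmpty {v : Fin j → M // LinearIndependent F v} := by
      constructor
      rintro ⟨v, hv⟩
      exact hj (by simpa using hv.fintype_card_le_finrank)
    rw [Nat.card_of_isEmpty, PP_zero (by omega)]
    simp

open Submodule in
lemma card_LI_quot (W : Submodule F M) (j : ℕ) :
    (Nat.card {v : Fin j → M // LinearIndependent F (W.mkQ ∘ v)} : ℝ)
      = (Fintype.card F : ℝ) ^ (finrank F W * j)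
          * PP (Fintype.card F) (finrank F (M ⧸ W)) j := by
  obtain ⟨W', hW'⟩ := Submodule.exists_isCompl W
  set sec : (M ⧸ W) → M := fun x => ((quotientEquivOfIsCompl W W' hW') x : M) with hsecdef
  have hsec : ∀ x, W.mkQ (sec x) = x := by
    intro x
    rw [mkQ_apply]
    exact mk_quotientEquivOfIsCompl_apply hW' x
  have hsub : ∀ (v : Fin j → M) (i : Fin j), v i - sec (W.mkQ (v i)) ∈ W := by
    intro v i
    have : W.mkQ (v i - sec (W.mkQ (v i))) = 0 := by rw [map_sub, hsec, sub_self]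
    rwa [mkQ_apply, Submodule.Quotient.mk_eq_zero] at this
  have hadd : ∀ (u : Fin j → M ⧸ W) (w : Fin j → W),
      W.mkQ ∘ (fun i => sec (u i) + (w i : M)) = u := by
    intro u w
    funext i
    have h0 : W.mkQ (w i : M) = 0 := by
      rw [mkQ_apply, Submodule.Quotient.mk_eq_zero]; exact (w i).2
    simp only [Function.comp_apply, map_add, hsec, h0, add_zero]
  have e : {v : Fin j → M // LinearIndependent F (W.mkQ ∘ v)}
      ≃ {u : Fin j → M ⧸ W // LinearIndependent F u} × (Fin j → W) :=
    { toFun := fun v => (⟨W.mkQ ∘ v.1, v.2⟩, fun i => ⟨v.1 i - sec (W.mkQ (v.1 i)), hsub v.1 i⟩)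
      invFun := fun p => ⟨fun i => sec (p.1.1 i) + (p.2 i : M), by
        rw [hadd p.1.1 p.2]; exact p.1.2⟩
      left_inv := fun v => by
        apply Subtype.ext
        funext i
        simp
      right_inv := fun p => by
        refine Prod.ext (Subtype.ext ?_) (funext fun i => Subtype.ext ?_)
        · exact hadd p.1.1 p.2
        · have : W.mkQ (sec (p.1.1 i) + (p.2 i : M)) = p.1.1 i := congrFun (hadd p.1.1 p.2) i
          simp only [this]
          abel }
  rw [Nat.card_congr e, Nat.card_prod, Nat.card_fun]
  have : Finite M := Module.finite_of_finite F
  have hcardW : Nat.card W = Fintype.card F ^ finrank F W := by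
    have : Fintype W := Fintype.ofFinite W
    rw [Nat.card_eq_fintype_card, card_eq_pow_finrank (K := F)]
  push_cast
  rw [card_LI, hcardW]
  push_cast
  rw [← pow_mul, Nat.card_eq_fintype_card, Fintype.card_fin]
  ring

open Submodule in
lemma card_inf_bot (W : Submodule F M) (j : ℕ) :
    (Nat.card {Y : Submodule F M // finrank F Y = j ∧ Y ⊓ W = ⊥} : ℝ)
        * PP (Fintype.card F) j j
      = (Fintype.card F : ℝ) ^ (finrank F W * j)
          * PP (Fintype.card F) (finrank F (M ⧸ W)) j := by
  classical
  have : Finite M := Module.finite_of_finite F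
  have hsubfin : Finite (Submodule F M) :=
    Finite.of_injective (fun Y => (Y : Set M)) SetLike.coe_injective
  set S := {Y : Submodule F M // finrank F Y = j ∧ Y ⊓ W = ⊥} with hS
  -- the classifying map
  have key : ∀ (v : Fin j → M), LinearIndependent F (W.mkQ ∘ v) →
      finrank F (span F (Set.range v)) = j ∧ span F (Set.range v) ⊓ W = ⊥ := by
    intro v hv
    have h0 : LinearIndependent F v := LinearIndependent.of_comp W.mkQ hv
    constructor
    · rw [finrank_span_eq_card h0, Fintype.card_fin]
    · rw [eq_bot_iff]
      rintro x hx
      rw [Submodule.mem_inf] at hx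
      obtain ⟨c, hc⟩ := mem_span_range_iff_exists_fun F |>.mp hx.1
      have hzero : ∑ i, c i • (W.mkQ ∘ v) i = 0 := by
        simp only [Function.comp_apply, ← map_smul, ← map_sum, hc]
        rw [mkQ_apply, Submodule.Quotient.mk_eq_zero W]
        exact hx.2
      have := Fintype.linearIndependent_iff.mp hv c hzero
      simp only [mem_bot]
      rw [← hc]
      simp [this]
  let g : {v : Fin j → M // LinearIndependent F (W.mkQ ∘ v)} → S :=
    fun v => ⟨span F (Set.range v.1), key v.1 v.2⟩
  -- fiber equivalence
  have fib : ∀ Y : S, {v : {v : Fin j → M // LinearIndependent F (W.mkQ ∘ v)} // g v = Y}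
      ≃ {u : Fin j → ↥(Y.1) // LinearIndependent F u} := by
    intro Y
    refine
      { toFun := fun v => ⟨fun i => ⟨v.1.1 i, ?_⟩, ?_⟩
        invFun := fun u => ⟨⟨fun i => (u.1 i : M), ?_⟩, ?_⟩
        left_inv := fun v => by
          apply Subtype.ext; apply Subtype.ext; funext i; rfl
        right_inv := fun u => by
          apply Subtype.ext; funext i; apply Subtype.ext; rfl }
    · have : span F (Set.range v.1.1) = Y.1 := congrArg Subtype.val v.2
      rw [← this]
      exact subset_span (Set.mem_range_self i)
    · apply LinearIndependent.of_comp (Y.1).subtype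
      exact LinearIndependent.of_comp W.mkQ v.1.2
    · -- LI of mkQ ∘ coe ∘ u
      rw [Fintype.linearIndependent_iff]
      intro c hc
      have hmem : ∑ i, c i • (u.1 i : M) ∈ W := by
        have : W.mkQ (∑ i, c i • (u.1 i : M)) = 0 := by
          rw [map_sum]
          simpa using hc
        rwa [mkQ_apply, Submodule.Quotient.mk_eq_zero W] at this
      have hmemY : ∑ i, c i • (u.1 i : M) ∈ Y.1 :=
        sum_mem fun i _ => Y.1.smul_mem _ (u.1 i).2
      have hzero : ∑ i, c i • (u.1 i : M) = 0 := by
        have h2 := Y.2.2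
        have : ∑ i, c i • (u.1 i : M) ∈ Y.1 ⊓ W := Submodule.mem_inf.mpr ⟨hmemY, hmem⟩
        rw [h2, Submodule.mem_bot] at this
        exact this
      apply Fintype.linearIndependent_iff.mp u.2 c
      apply Subtype.ext
      push_cast
      exact hzero
    · -- g-proof : span of coe ∘ u equals Y
      apply Subtype.ext
      have hle : span F (Set.range (fun i => (u.1 i : M))) ≤ Y.1 := by
        rw [span_le]
        rintro x ⟨i, rfl⟩
        exact (u.1 i).2
      apply Submodule.eq_of_le_of_finrank_eq hle
      have hLI : LinearIndependent F (fun i => (u.1 i : M)) :=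
        u.2.map' (Y.1).subtype (ker_subtype _)
      rw [finrank_span_eq_card hLI, Fintype.card_fin, Y.2.1]
  -- assemble
  have etot : {v : Fin j → M // LinearIndependent F (W.mkQ ∘ v)}
      ≃ Σ Y : S, {u : Fin j → ↥(Y.1) // LinearIndependent F u} :=
    ((Equiv.sigmaFiberEquiv g).symm).trans (Equiv.sigmaCongrRight fib)
  haveI : Fintype S := Fintype.ofFinite S
  haveI : ∀ Y : S, Fintype {u : Fin j → ↥(Y.1) // LinearIndependent F u} :=
    fun Y => Fintype.ofFinite _
  have hq := card_LI_quot W j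
  rw [Nat.card_congr etot] at hq
  rw [Nat.card_eq_fintype_card, Fintype.card_sigma] at hq
  rw [← hq]
  push_cast
  rw [Finset.sum_congr rfl (fun Y _ => ?_), Finset.sum_const, Finset.card_univ, nsmul_eq_mul,
    Nat.card_eq_fintype_card]
  rw [← Nat.card_eq_fintype_card, card_LI j (M := ↥(Y.1)), Y.2.1]

lemma two_le_cardF : 2 ≤ Fintype.card F := Fintype.one_lt_card

open Submodule in
lemma card_inf_bot' (W : Submodule F M) (j : ℕ) :
    (Nat.card {Y : Submodule F M // finrank F Y = j ∧ Y ⊓ W = ⊥} : ℝ)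
      = (Fintype.card F : ℝ) ^ (finrank F W * j)
          * gaussBinom (Fintype.card F) (finrank F (M ⧸ W)) j := by
  have h := card_inf_bot W j
  have hp := PP_pos (two_le_cardF (F := F)) (le_refl j)
  rw [gaussBinom_eq_div, ← mul_div_assoc, eq_div_iff hp.ne']
  exact h

open Submodule in
lemma card_grass (j : ℕ) :
    (Nat.card {Y : Submodule F M // finrank F Y = j} : ℝ)
      = gaussBinom (Fintype.card F) (finrank F M) j := by
  have e : {Y : Submodule F M // finrank F Y = j ∧ Y ⊓ (⊥ : Submodule F M) = ⊥}
      ≃ {Y : Submodule F M // finrank F Y = j} :=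
    Equiv.subtypeEquivRight (by simp)
  rw [← Nat.card_congr e, card_inf_bot' (⊥ : Submodule F M) j, finrank_bot]
  have : finrank F (M ⧸ (⊥ : Submodule F M)) = finrank F M :=
    (Submodule.quotEquivOfEqBot ⊥ rfl).finrank_eq
  rw [this]
  simp

open Submodule in
lemma card_fiber_eq (U W : Submodule F M) (hWU : W ≤ U) (s : ℕ)
    (hks : finrank F W ≤ s) :
    (Nat.card {V : Submodule F M // finrank F V = s ∧ U ⊓ V = W} : ℝ)
      = (Fintype.card F : ℝ)
            ^ ((finrank F U - finrank F W) * (s - finrank F W))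
          * gaussBinom (Fintype.card F) (finrank F M - finrank F U) (s - finrank F W) := by
  classical
  set k := finrank F W with hk
  set r := finrank F U with hr
  set m := finrank F M with hm
  have hkr : k ≤ r := Submodule.finrank_mono hWU
  have hrm : r ≤ m := Submodule.finrank_le U
  -- complement of U in M
  obtain ⟨C, hC⟩ := Submodule.exists_isCompl U
  have hUC_inf : U ⊓ C = ⊥ := hC.disjoint.eq_bot
  have hUC_sup : U ⊔ C = ⊤ := hC.codisjoint.eq_top
  have hCrank : finrank F C = m - r := by
    have := Submodule.finrank_sup_add_finrank_inf_eq U C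
    rw [hUC_inf, hUC_sup, finrank_bot, finrank_top] at this
    omega
  -- complement of W inside U
  obtain ⟨X, hX⟩ := Submodule.exists_isCompl (comap U.subtype W)
  set W' := map U.subtype X with hW'def
  have hW'U : W' ≤ U := map_subtype_le U X
  have hWW'_inf : W ⊓ W' = ⊥ := by
    have h1 : comap U.subtype W ⊓ X = ⊥ := hX.disjoint.eq_bot
    have := congrArg (map U.subtype) h1
    rwa [Submodule.map_inf _ (injective_subtype U), map_comap_subtype,
      inf_eq_right.mpr hWU, Submodule.map_bot] at this
  have hWW'_sup : W ⊔ W' = U := by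
    have h1 : comap U.subtype W ⊔ X = ⊤ := hX.codisjoint.eq_top
    have := congrArg (map U.subtype) h1
    rwa [Submodule.map_sup, map_comap_subtype, inf_eq_right.mpr hWU,
      Submodule.map_subtype_top] at this
  have hW'rank : finrank F W' = r - k := by
    have := Submodule.finrank_sup_add_finrank_inf_eq W W'
    rw [hWW'_inf, hWW'_sup, finrank_bot] at this
    omega
  set D := W' ⊔ C with hD
  have hW'D : W' ≤ D := le_sup_left
  have hCD : C ≤ D := le_sup_right
  have hW'C : W' ⊓ C = ⊥ := by
    rw [eq_bot_iff, ← hUC_inf]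
    exact inf_le_inf_right C hW'U
  have hDrank : finrank F D = (r - k) + (m - r) := by
    have := Submodule.finrank_sup_add_finrank_inf_eq W' C
    rw [hW'C, finrank_bot, hW'rank, hCrank, ← hD] at this
    omega
  have hCU : C ⊓ U = ⊥ := inf_comm U C ▸ hUC_inf
  have hDU : D ⊓ U = W' := by
    rw [hD, sup_inf_assoc_of_le C hW'U, hCU, sup_bot_eq]
  have hVDU : ∀ V : Submodule F M, U ⊓ V = W → (V ⊓ D) ⊓ U = ⊥ := by
    intro V hV
    calc (V ⊓ D) ⊓ U = V ⊓ W' := by rw [inf_assoc, hDU]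
      _ = (V ⊓ U) ⊓ W' := by rw [inf_assoc, inf_eq_right.mpr hW'U]
      _ = W ⊓ W' := by rw [inf_comm V U, hV]
      _ = ⊥ := hWW'_inf
  have hsup : ∀ V : Submodule F M, U ⊓ V = W → V ⊔ D = ⊤ := by
    intro V hV
    have hWV : W ≤ V := hV ▸ inf_le_right
    rw [eq_top_iff, ← hUC_sup, ← hWW'_sup, hD]
    refine sup_le (sup_le (hWV.trans le_sup_left) ?_) ?_
    · exact le_sup_left.trans le_sup_right
    · exact le_sup_right.trans le_sup_right
  have hrankVD : ∀ V : Submodule F M, finrank F V = s → U ⊓ V = W →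
      finrank F ↥(V ⊓ D) = s - k := by
    intro V h1 h2
    have := Submodule.finrank_sup_add_finrank_inf_eq V D
    rw [hsup V h2, finrank_top, h1, hDrank] at this
    omega
  have hWD : W ⊓ D = ⊥ := by
    calc W ⊓ D = (W ⊓ U) ⊓ D := by rw [inf_eq_left.mpr hWU]
      _ = W ⊓ (U ⊓ D) := by rw [inf_assoc]
      _ = W ⊓ W' := by rw [inf_comm U D, hDU]
      _ = ⊥ := hWW'_inf
  -- first equivalence
  have e1 : {V : Submodule F M // finrank F V = s ∧ U ⊓ V = W}
      ≃ {Y : Submodule F M // (finrank F Y = s - k ∧ Y ⊓ W' = ⊥) ∧ Y ≤ D} := by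
    refine
      { toFun := fun V => ⟨V.1 ⊓ D, ⟨hrankVD V.1 V.2.1 V.2.2, ?_⟩, inf_le_right⟩
        invFun := fun Y => ⟨W ⊔ Y.1, ?_, ?_⟩
        left_inv := fun V => Subtype.ext ?_
        right_inv := fun Y => Subtype.ext ?_ }
    · apply eq_bot_iff.mpr
      calc V.1 ⊓ D ⊓ W' ≤ V.1 ⊓ D ⊓ U := inf_le_inf_left _ hW'U
        _ = ⊥ := hVDU V.1 V.2.2
    · -- finrank (W ⊔ Y) = s
      have hYU : Y.1 ⊓ U = ⊥ := by
        calc Y.1 ⊓ U = (Y.1 ⊓ D) ⊓ U := by rw [inf_eq_left.mpr Y.2.2]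
          _ = Y.1 ⊓ W' := by rw [inf_assoc, hDU]
          _ = ⊥ := Y.2.1.2
      have hWY : W ⊓ Y.1 = ⊥ := by
        apply eq_bot_iff.mpr
        calc W ⊓ Y.1 ≤ U ⊓ Y.1 := inf_le_inf_right _ hWU
          _ = ⊥ := by rw [inf_comm]; exact hYU
      have := Submodule.finrank_sup_add_finrank_inf_eq W Y.1
      rw [hWY, finrank_bot, Y.2.1.1] at this
      omega
    · -- U ⊓ (W ⊔ Y) = W
      have hYU : Y.1 ⊓ U = ⊥ := by
        calc Y.1 ⊓ U = (Y.1 ⊓ D) ⊓ U := by rw [inf_eq_left.mpr Y.2.2]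
          _ = Y.1 ⊓ W' := by rw [inf_assoc, hDU]
          _ = ⊥ := Y.2.1.2
      rw [inf_comm, sup_inf_assoc_of_le Y.1 hWU, hYU, sup_bot_eq]
    · -- W ⊔ (V ⊓ D) = V
      have hWV : W ≤ V.1 := V.2.2.symm.trans_le inf_le_right
      have hbot : W ⊓ (V.1 ⊓ D) = ⊥ := by
        apply eq_bot_iff.mpr
        calc W ⊓ (V.1 ⊓ D) ≤ U ⊓ (V.1 ⊓ D) := inf_le_inf_right _ hWU
          _ = ⊥ := by rw [inf_comm]; exact hVDU V.1 V.2.2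
      apply Submodule.eq_of_le_of_finrank_eq (sup_le hWV inf_le_left)
      have := Submodule.finrank_sup_add_finrank_inf_eq W (V.1 ⊓ D)
      rw [hbot, finrank_bot, hrankVD V.1 V.2.1 V.2.2] at this
      rw [V.2.1]
      omega
    · -- (W ⊔ Y) ⊓ D = Y
      show (W ⊔ Y.1) ⊓ D = Y.1
      rw [sup_comm W Y.1, sup_inf_assoc_of_le W Y.2.2, hWD, sup_bot_eq]
  -- second equivalence : into submodules of D
  have e2 : {Y : Submodule F M // (finrank F Y = s - k ∧ Y ⊓ W' = ⊥) ∧ Y ≤ D}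
      ≃ {Z : Submodule F ↥D // finrank F Z = s - k ∧
          Z ⊓ comap D.subtype W' = ⊥} := by
    have hmapW' : map D.subtype (comap D.subtype W') = W' := by
      rw [map_comap_subtype, inf_eq_right.mpr hW'D]
    refine
      { toFun := fun Y => ⟨comap D.subtype Y.1, ?_, ?_⟩
        invFun := fun Z => ⟨map D.subtype Z.1, ⟨?_, ?_⟩, map_subtype_le D Z.1⟩
        left_inv := fun Y => Subtype.ext ?_
        right_inv := fun Z => Subtype.ext ?_ }
    · rw [(comapSubtypeEquivOfLe Y.2.2).finrank_eq]
      exact Y.2.1.1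
    · rw [← Submodule.comap_inf, Y.2.1.2, Submodule.comap_bot, ker_subtype]
    · rw [Submodule.finrank_map_subtype_eq]
      exact Z.2.1
    · calc map D.subtype Z.1 ⊓ W'
            = map D.subtype Z.1 ⊓ map D.subtype (comap D.subtype W') := by rw [hmapW']
        _ = map D.subtype (Z.1 ⊓ comap D.subtype W') :=
            (Submodule.map_inf _ (injective_subtype D)).symm
        _ = ⊥ := by rw [Z.2.2, Submodule.map_bot]
    · show map D.subtype (comap D.subtype Y.1) = Y.1
      rw [map_comap_subtype, inf_eq_right.mpr Y.2.2]
    · show comap D.subtype (map D.subtype Z.1) = Z.1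
      exact Submodule.comap_map_eq_of_injective (injective_subtype D) Z.1
  rw [Nat.card_congr (e1.trans e2), card_inf_bot']
  have hcomaprank : finrank F ↥(comap D.subtype W') = r - k := by
    rw [(comapSubtypeEquivOfLe hW'D).finrank_eq, hW'rank]
  have hquot : finrank F (↥D ⧸ comap D.subtype W') = m - r := by
    have := Submodule.finrank_quotient_add_finrank (comap D.subtype W')
    rw [hcomaprank, hDrank] at this
    omega
  rw [hcomaprank, hquot]

open Submodule in
lemma card_dim_inter (U : Submodule F M) (k s : ℕ) (hks : k ≤ s) :
    (Nat.card {V : Submodule F M // finrank F V = s ∧ finrank F ↥(U ⊓ V) = k} : ℝ)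
      = gaussBinom (Fintype.card F) (finrank F U) k
        * (Fintype.card F : ℝ) ^ ((finrank F U - k) * (s - k))
        * gaussBinom (Fintype.card F) (finrank F M - finrank F U) (s - k) := by
  classical
  have : Finite M := Module.finite_of_finite F
  have : Finite (Submodule F M) :=
    Finite.of_injective (fun Y => (Y : Set M)) SetLike.coe_injective
  have : Finite (Submodule F ↥U) :=
    Finite.of_injective (fun Y => (Y : Set ↥U)) SetLike.coe_injective
  set SW := {W : Submodule F ↥U // finrank F W = k} with hSW
  let g : {V : Submodule F M // finrank F V = s ∧ finrank F ↥(U ⊓ V) = k} → SW :=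
    fun V => ⟨comap U.subtype (U ⊓ V.1), by
      rw [(comapSubtypeEquivOfLe inf_le_left).finrank_eq]; exact V.2.2⟩
  have fib : ∀ W₀ : SW,
      {V : {V : Submodule F M // finrank F V = s ∧ finrank F ↥(U ⊓ V) = k} // g V = W₀}
        ≃ {V : Submodule F M // finrank F V = s ∧ U ⊓ V = map U.subtype W₀.1} := by
    intro W₀
    refine
      { toFun := fun V => ⟨V.1.1, V.1.2.1, ?_⟩
        invFun := fun V => ⟨⟨V.1, V.2.1, ?_⟩, ?_⟩
        left_inv := fun V => Subtype.ext (Subtype.ext rfl)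
        right_inv := fun V => Subtype.ext rfl }
    · have h1 := congrArg (map U.subtype) (Subtype.ext_iff.mp V.2)
      simp only [g] at h1
      rw [map_comap_subtype, ← inf_assoc, inf_idem] at h1
      exact h1.symm ▸ rfl
    · rw [V.2.2, Submodule.finrank_map_subtype_eq]
      exact W₀.2
    · apply Subtype.ext
      show comap U.subtype (U ⊓ V.1) = W₀.1
      rw [V.2.2]
      exact Submodule.comap_map_eq_of_injective (injective_subtype U) W₀.1
  have etot : {V : Submodule F M // finrank F V = s ∧ finrank F ↥(U ⊓ V) = k}
      ≃ Σ W₀ : SW, {V : Submodule F M // finrank F V = s ∧ U ⊓ V = map U.subtype W₀.1} :=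
    ((Equiv.sigmaFiberEquiv g).symm).trans (Equiv.sigmaCongrRight fib)
  haveI : Fintype SW := Fintype.ofFinite SW
  haveI : ∀ W₀ : SW,
      Fintype {V : Submodule F M // finrank F V = s ∧ U ⊓ V = map U.subtype W₀.1} :=
    fun W₀ => Fintype.ofFinite _
  have hfib : ∀ W₀ : SW,
      (Fintype.card {V : Submodule F M // finrank F V = s ∧ U ⊓ V = map U.subtype W₀.1} : ℝ)
        = (Fintype.card F : ℝ) ^ ((finrank F U - k) * (s - k))
            * gaussBinom (Fintype.card F) (finrank F M - finrank F U) (s - k) := by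
    intro W₀
    rw [← Nat.card_eq_fintype_card,
      card_fiber_eq U (map U.subtype W₀.1) (map_subtype_le U W₀.1) s]
    · rw [Submodule.finrank_map_subtype_eq, W₀.2]
    · rw [Submodule.finrank_map_subtype_eq, W₀.2]; exact hks
  have hcard : (Nat.card SW : ℝ) = gaussBinom (Fintype.card F) (finrank F ↥U) k :=
    card_grass (M := ↥U) k
  rw [Nat.card_congr etot, Nat.card_eq_fintype_card, Fintype.card_sigma]
  push_cast
  rw [Finset.sum_congr rfl (fun W₀ _ => hfib W₀), Finset.sum_const, Finset.card_univ,
    nsmul_eq_mul, ← Nat.card_eq_fintype_card, hcard]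
  ring

lemma gaussBinom_zero_of_lt {q m j : ℕ} (h : m < j) : gaussBinom q m j = 0 := by
  rw [gaussBinom_eq_div, PP_zero h, zero_div]

end Aux

theorem count_at_injection_distance (F : Type) [Field F] [Fintype F] (n r s d : ℕ)
    (U : Submodule F (Fin n → F)) (hU : finrank F ↥U = r) :
    (Nat.card {V : Submodule F (Fin n → F) // finrank F ↥V = s ∧ dI U V = d}
      = Nat.card {V : Submodule F (Fin n → F) // finrank F ↥V = s ∧
          (dS U V : ℤ) = 2 * (d : ℤ) - |(r : ℤ) - (s : ℤ)|}) ∧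
    (s ≤ r →
      (Nat.card {V : Submodule F (Fin n → F) // finrank F ↥V = s ∧ dI U V = d} : ℝ)
        = (Fintype.card F : ℝ) ^ ((d : ℤ) * ((d : ℤ) + s - r))
            * gaussBinom (Fintype.card F) r d
            * gaussZ (Fintype.card F) (n - r) ((d : ℤ) + s - r)) ∧
    (r ≤ s →
      (Nat.card {V : Submodule F (Fin n → F) // finrank F ↥V = s ∧ dI U V = d} : ℝ)
        = (Fintype.card F : ℝ) ^ ((d : ℤ) * ((d : ℤ) + r - s))
            * gaussZ (Fintype.card F) r ((d : ℤ) + r - s)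
            * gaussBinom (Fintype.card F) (n - r) d) := by
  have hq : 2 ≤ Fintype.card F := two_le_cardF (F := F)
  have hM : finrank F (Fin n → F) = n := by
    rw [Module.finrank_fintype_fun_eq_card, Fintype.card_fin]
  have hrn : r ≤ n := by
    have h := Submodule.finrank_le U
    rwa [hU, hM] at h
  have hiU : ∀ V : Submodule F (Fin n → F), finrank F ↥(U ⊓ V) ≤ r :=
    fun V => hU ▸ Submodule.finrank_mono inf_le_left
  have hiV : ∀ V : Submodule F (Fin n → F), finrank F ↥V = s →
      finrank F ↥(U ⊓ V) ≤ s :=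
    fun V hV => hV ▸ Submodule.finrank_mono inf_le_right
  have hdI : ∀ V : Submodule F (Fin n → F), finrank F ↥V = s →
      dI U V = max r s - finrank F ↥(U ⊓ V) := by
    intro V hV
    unfold dI
    rw [hU, hV]
  refine ⟨?_, ?_, ?_⟩
  · -- part 1
    apply Nat.card_congr
    apply Equiv.subtypeEquivRight
    intro V
    constructor <;> rintro ⟨hV, h2⟩ <;> refine ⟨hV, ?_⟩
    · have hsum := Submodule.finrank_sup_add_finrank_inf_eq U V
      rw [hU, hV] at hsum
      rw [hdI V hV] at h2
      unfold dS
      have h3 := hiU V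
      have h4 := hiV V hV
      have h5 : finrank F ↥(U ⊓ V) ≤ finrank F ↥(U ⊔ V) :=
        Submodule.finrank_mono (inf_le_left.trans le_sup_left)
      rcases le_total r s with h | h
      · rw [abs_sub_comm, abs_of_nonneg (sub_nonneg.mpr (by exact_mod_cast h))]
        rw [max_eq_right h] at h2
        omega
      · rw [abs_of_nonneg (sub_nonneg.mpr (by exact_mod_cast h))]
        rw [max_eq_left h] at h2
        omega
    · have hsum := Submodule.finrank_sup_add_finrank_inf_eq U V
      rw [hU, hV] at hsum
      rw [hdI V hV]
      unfold dS at h2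
      have h3 := hiU V
      have h4 := hiV V hV
      have h5 : finrank F ↥(U ⊓ V) ≤ finrank F ↥(U ⊔ V) :=
        Submodule.finrank_mono (inf_le_left.trans le_sup_left)
      rcases le_total r s with h | h
      · rw [abs_sub_comm, abs_of_nonneg (sub_nonneg.mpr (by exact_mod_cast h))] at h2
        rw [max_eq_right h]
        omega
      · rw [abs_of_nonneg (sub_nonneg.mpr (by exact_mod_cast h))] at h2
        rw [max_eq_left h]
        omega
  · -- part 2 : s ≤ r
    intro hsr
    by_cases hfeas : d ≤ r ∧ r - d ≤ s
    · set k := r - d with hkdef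
      have e : {V : Submodule F (Fin n → F) // finrank F ↥V = s ∧ dI U V = d}
          ≃ {V : Submodule F (Fin n → F) // finrank F ↥V = s ∧
              finrank F ↥(U ⊓ V) = k} := by
        apply Equiv.subtypeEquivRight
        intro V
        constructor <;> rintro ⟨hV, h2⟩ <;> refine ⟨hV, ?_⟩ <;>
          [rw [hdI V hV, max_eq_left hsr] at h2; rw [hdI V hV, max_eq_left hsr]] <;>
          have h3 := hiV V hV <;> omega
      rw [Nat.card_congr e, card_dim_inter U k s (by omega), hU, hM]
      have h1 : gaussBinom (Fintype.card F) r k = gaussBinom (Fintype.card F) r d := by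
        rw [gaussBinom_symm hq (by omega : k ≤ r), show r - k = d by omega]
      have h2 : (Fintype.card F : ℝ) ^ ((d : ℤ) * ((d : ℤ) + s - r))
          = (Fintype.card F : ℝ) ^ ((r - k) * (s - k)) := by
        rw [show r - k = d by omega, show s - k = d + s - r by omega,
          show (d : ℤ) * ((d : ℤ) + s - r) = ((d * (d + s - r) : ℕ) : ℤ) by
            rw [Nat.cast_mul]; congr 1; omega]
        exact zpow_natCast _ _
      have h3 : gaussZ (Fintype.card F) (n - r) ((d : ℤ) + s - r)
          = gaussBinom (Fintype.card F) (n - r) (s - k) := by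
        rw [gaussZ, if_pos (by omega : (0:ℤ) ≤ (d : ℤ) + s - r)]
        congr 1
        omega
      rw [h1, h2, h3]
      ring
    · have : IsEmpty {V : Submodule F (Fin n → F) // finrank F ↥V = s ∧ dI U V = d} := by
        constructor
        rintro ⟨V, hV, h2⟩
        rw [hdI V hV, max_eq_left hsr] at h2
        have h3 := hiV V hV
        omega
      rw [Nat.card_of_isEmpty]
      by_cases hdr : d ≤ r
      · rw [gaussZ, if_neg (by omega : ¬ (0:ℤ) ≤ (d : ℤ) + s - r)]
        simp
      · rw [gaussBinom_zero_of_lt (by omega : r < d)]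
        simp
  · -- part 3 : r ≤ s
    intro hrs
    by_cases hfeas : d ≤ s ∧ s - d ≤ r
    · set k := s - d with hkdef
      have e : {V : Submodule F (Fin n → F) // finrank F ↥V = s ∧ dI U V = d}
          ≃ {V : Submodule F (Fin n → F) // finrank F ↥V = s ∧
              finrank F ↥(U ⊓ V) = k} := by
        apply Equiv.subtypeEquivRight
        intro V
        constructor <;> rintro ⟨hV, h2⟩ <;> refine ⟨hV, ?_⟩ <;>
          [rw [hdI V hV, max_eq_right hrs] at h2; rw [hdI V hV, max_eq_right hrs]] <;>
          have h3 := hiU V <;> omega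
      rw [Nat.card_congr e, card_dim_inter U k s (by omega), hU, hM]
      have h1 : gaussBinom (Fintype.card F) r k = gaussBinom (Fintype.card F) r (r - k) :=
        gaussBinom_symm hq (by omega : k ≤ r)
      have h2 : (Fintype.card F : ℝ) ^ ((d : ℤ) * ((d : ℤ) + r - s))
          = (Fintype.card F : ℝ) ^ ((r - k) * (s - k)) := by
        rw [show r - k = d + r - s by omega, show s - k = d by omega,
          mul_comm (d + r - s) d,
          show (d : ℤ) * ((d : ℤ) + r - s) = ((d * (d + r - s) : ℕ) : ℤ) by
            rw [Nat.cast_mul]; congr 1; omega]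
        exact zpow_natCast _ _
      have h3 : gaussZ (Fintype.card F) r ((d : ℤ) + r - s)
          = gaussBinom (Fintype.card F) r (r - k) := by
        rw [gaussZ, if_pos (by omega : (0:ℤ) ≤ (d : ℤ) + r - s)]
        congr 1
        omega
      have h4 : s - k = d := by omega
      rw [h1, h2, h3, h4]
      ring
    · have : IsEmpty {V : Submodule F (Fin n → F) // finrank F ↥V = s ∧ dI U V = d} := by
        constructor
        rintro ⟨V, hV, h2⟩
        rw [hdI V hV, max_eq_right hrs] at h2
        have h3 := hiU V
        omega
      rw [Nat.card_of_isEmpty]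
      by_cases hds : d ≤ s
      · rw [gaussZ, if_neg (by omega : ¬ (0:ℤ) ≤ (d : ℤ) + r - s)]
        simp
      · rw [gaussZ, if_pos (by omega : (0:ℤ) ≤ (d : ℤ) + r - s),
          gaussBinom_zero_of_lt (by omega : r < ((d : ℤ) + r - s).toNat)]
        simp
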